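/- Let m > 0, k_x > 0, α > 0, c ≥ 0, let e_x, e_v ∈ ℝ³ and e_Ω ∈ ℝ², and let q, q_d ∈ S² with ⟨q_d, q⟩ > −1. Define V = (1/2)k_x‖e_x‖₂² + (1/2)m‖e_v‖₂² + c⟨e_x, e_v⟩ + α·Ψ(q, q_d) + (1/2)‖e_Ω‖₂², and set z₁ = (‖e_x‖₂, ‖e_v‖₂) ∈ ℝ², z₂ = (‖e_q(q, q_d)‖₂, ‖e_Ω‖₂) ∈ ℝ². Then z₁ᵀM₁z₁ + z₂ᵀM₂z₂ ≤ V ≤ z₁ᵀM₃z₁ + z₂ᵀM₄z₂, where M₁ = (1/2)[[k_x, −c], [−c, m]], M₃ = (1/2)[[k_x, c], [c, m]], M₂ = (1/2)·diag(2α, 1), and M₄ = (1/2)·diag(4α, 1). -/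

import Mathlib

open Matrix
open scoped RealInnerProductSpace

/-- Cross product on ℝ³ (as `EuclideanSpace ℝ (Fin 3)`). -/
noncomputable def cross (a b : EuclideanSpace ℝ (Fin 3)) : EuclideanSpace ℝ (Fin 3) :=
  WithLp.toLp 2 ![a 1 * b 2 - a 2 * b 1, a 2 * b 0 - a 0 * b 2, a 0 * b 1 - a 1 * b 0]

/-- Reduced-attitude error function Ψ(q, q_d) = 2 − √2·√(1 + ⟨q_d, q⟩). -/
noncomputable def Psi (q qd : EuclideanSpace ℝ (Fin 3)) : ℝ :=
  2 - Real.sqrt 2 * Real.sqrt (1 + ⟪qd, q⟫)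

/-- Reduced-attitude error vector e_q(q, q_d). -/
noncomputable def eVec (q qd : EuclideanSpace ℝ (Fin 3)) : EuclideanSpace ℝ (Fin 3) :=
  (1 / (Real.sqrt 2 * Real.sqrt (1 + ⟪qd, q⟫))) • cross q (cross q qd)

lemma cross_cross_eq (q qd : EuclideanSpace ℝ (Fin 3)) (hq : ‖q‖ = 1) :
    cross q (cross q qd) = ⟪qd, q⟫ • q - qd := by
  have hA : q 0 ^ 2 + q 1 ^ 2 + q 2 ^ 2 = 1 := by
    have h1 : ‖q‖ ^ 2 = 1 := by rw [hq]; norm_num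
    rw [EuclideanSpace.norm_eq, Fin.sum_univ_three,
      Real.sq_sqrt (by positivity)] at h1
    simp only [Real.norm_eq_abs, sq_abs] at h1
    linarith
  have hs : ⟪qd, q⟫ = qd 0 * q 0 + qd 1 * q 1 + qd 2 * q 2 := by
    simp [PiLp.inner_apply, RCLike.inner_apply, Fin.sum_univ_three]
    ring
  ext i
  fin_cases i
  · show cross q (cross q qd) 0 = _
    simp [cross, hs]
    linear_combination (-(qd 0)) * hA
  · show cross q (cross q qd) 1 = _
    simp [cross, hs]
    linear_combination (-(qd 1)) * hA
  · show cross q (cross q qd) 2 = _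
    simp [cross, hs]
    linear_combination (-(qd 2)) * hA

lemma norm_eVec_sq (q qd : EuclideanSpace ℝ (Fin 3)) (hq : ‖q‖ = 1) (hqd : ‖qd‖ = 1)
    (hang : ⟪qd, q⟫ > -1) : ‖eVec q qd‖ ^ 2 = (1 - ⟪qd, q⟫) / 2 := by
  set s := ⟪qd, q⟫ with hsdef
  have hpos : (0:ℝ) < 1 + s := by linarith
  have hcc : cross q (cross q qd) = s • q - qd := cross_cross_eq q qd hq
  have hnc : ‖s • q - qd‖ ^ 2 = 1 - s ^ 2 := by
    rw [norm_sub_sq_real]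
    have h1 : ⟪s • q, qd⟫ = s * s := by
      rw [real_inner_smul_left, real_inner_comm]
    rw [h1, norm_smul, hq, hqd]
    simp [mul_pow, sq_abs]
    try ring
  have ht2 : (Real.sqrt 2 * Real.sqrt (1 + s)) ^ 2 = 2 * (1 + s) := by
    rw [mul_pow, Real.sq_sqrt (by norm_num), Real.sq_sqrt hpos.le]
  have htpos : 0 < Real.sqrt 2 * Real.sqrt (1 + s) := by positivity
  rw [eVec, hcc, norm_smul]
  rw [mul_pow, ← hsdef]
  rw [hnc]
  rw [Real.norm_eq_abs, sq_abs, div_pow, one_pow, ht2]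
  field_simp
  ring

/-- The total Lyapunov function V is sandwiched between the quadratic forms
z₁ᵀM₁z₁ + z₂ᵀM₂z₂ and z₁ᵀM₃z₁ + z₂ᵀM₄z₂. -/
theorem lyapunov_sandwich
    (m kx α c : ℝ) (hm : 0 < m) (hkx : 0 < kx) (hα : 0 < α) (hc : 0 ≤ c)
    (ex ev : EuclideanSpace ℝ (Fin 3)) (eΩ : EuclideanSpace ℝ (Fin 2))
    (q qd : EuclideanSpace ℝ (Fin 3))
    (hq : ‖q‖ = 1) (hqd : ‖qd‖ = 1) (hang : ⟪qd, q⟫ > -1)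
    (V : ℝ)
    (hV : V = (1 / 2) * kx * ‖ex‖ ^ 2 + (1 / 2) * m * ‖ev‖ ^ 2 + c * ⟪ex, ev⟫ +
      α * Psi q qd + (1 / 2) * ‖eΩ‖ ^ 2)
    (z₁ z₂ : Fin 2 → ℝ)
    (hz₁ : z₁ = ![‖ex‖, ‖ev‖]) (hz₂ : z₂ = ![‖eVec q qd‖, ‖eΩ‖])
    (M₁ M₂ M₃ M₄ : Matrix (Fin 2) (Fin 2) ℝ)
    (hM₁ : M₁ = (1 / 2 : ℝ) • !![kx, -c; -c, m])
    (hM₃ : M₃ = (1 / 2 : ℝ) • !![kx, c; c, m])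
    (hM₂ : M₂ = (1 / 2 : ℝ) • Matrix.diagonal ![2 * α, 1])
    (hM₄ : M₄ = (1 / 2 : ℝ) • Matrix.diagonal ![4 * α, 1]) :
    z₁ ⬝ᵥ M₁.mulVec z₁ + z₂ ⬝ᵥ M₂.mulVec z₂ ≤ V ∧
    V ≤ z₁ ⬝ᵥ M₃.mulVec z₁ + z₂ ⬝ᵥ M₄.mulVec z₂ := by
  have hE : ‖eVec q qd‖ ^ 2 = (1 - ⟪qd, q⟫) / 2 := norm_eVec_sq q qd hq hqd hang
  have hsle : ⟪qd, q⟫ ≤ 1 := by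
    have := real_inner_le_norm qd q
    rwa [hq, hqd, one_mul] at this
  set s := ⟪qd, q⟫ with hsdef
  set t := Real.sqrt 2 * Real.sqrt (1 + s) with htdef
  have ht0 : 0 ≤ t := by positivity
  have ht2 : t ^ 2 = 2 * (1 + s) := by
    rw [htdef, mul_pow, Real.sq_sqrt (by norm_num), Real.sq_sqrt (by linarith)]
  have htle : t ≤ 2 := by nlinarith
  have hcs := abs_real_inner_le_norm ex ev
  rw [abs_le] at hcs
  subst hV hz₁ hz₂ hM₁ hM₂ hM₃ hM₄
  simp only [Psi, Matrix.mulVec, dotProduct, Fin.sum_univ_two, Matrix.smul_apply,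
    Matrix.cons_val_zero, Matrix.cons_val_one, Matrix.head_cons, Matrix.of_apply,
    Matrix.diagonal_apply, Matrix.cons_val', Matrix.head_fin_const, smul_eq_mul,
    Matrix.cons_val_fin_one, ne_eq, not_false_eq_true]
  norm_num
  have hip : ⟪ex, ev⟫ = ∑ x : Fin 3, ex x * ev x := by
    simp [PiLp.inner_apply, RCLike.inner_apply, mul_comm]
  rw [hip] at hcs
  have hiq : (∑ x : Fin 3, qd x * q x) = s := by
    rw [hsdef]; simp [PiLp.inner_apply, RCLike.inner_apply, mul_comm]
  rw [← hip] at hcs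
  rw [← hsdef, ← htdef]
  constructor
  · nlinarith [hcs.1, hE, ht2, mul_nonneg hα.le (sq_nonneg (t - 2)),
      mul_nonneg hc (by nlinarith [hcs.1] : (0:ℝ) ≤ ⟪ex, ev⟫ + ‖ex‖ * ‖ev‖)]
  · nlinarith [hcs.2, hE, ht2, mul_nonneg (mul_nonneg hα.le ht0) (by linarith : (0:ℝ) ≤ 2 - t),
      mul_nonneg hc (by nlinarith [hcs.2] : (0:ℝ) ≤ ‖ex‖ * ‖ev‖ - ⟪ex, ev⟫)]
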